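/- An outmap s : {0,1}^n → {0,1}^n defines a unique sink orientation of the n-dimensional hypercube if and only if for all distinct vertices u, v ∈ {0,1}^n, (s(u) XOR s(v)) AND (u XOR v) ≠ 0^n, i.e., there exists some coordinate i with u_i ≠ v_i and s(u)_i ≠ s(v)_i. -/
import Mathlib


/-- Flip coordinate `i` of a vertex of the hypercube. -/
def flipV {n : ℕ} (u : Fin n → Bool) (i : Fin n) : Fin n → Bool :=
  fun j => if j = i then !u j else u j

/-- `v` lies in the face containing `base` spanned by dimensions `I`. -/
def InFace {n : ℕ} (base : Fin n → Bool) (I : Finset (Fin n)) (v : Fin n → Bool) : Prop :=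
  ∀ i ∉ I, v i = base i

/-- `v` is a sink of the face spanned by `I` with respect to outmap `s`. -/
def IsSinkIn {n : ℕ} (s : (Fin n → Bool) → (Fin n → Bool)) (I : Finset (Fin n))
    (v : Fin n → Bool) : Prop :=
  ∀ i ∈ I, s v i = false

/-- Reverse all edges in dimensions belonging to `J`. -/
def revSet {n : ℕ} (J : Finset (Fin n)) (s : (Fin n → Bool) → (Fin n → Bool)) :
    (Fin n → Bool) → (Fin n → Bool) :=
  fun v j => if j ∈ J then !(s v j) else s v j

lemma usink_congr {n : ℕ} {s t : (Fin n → Bool) → (Fin n → Bool)}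
    {base : Fin n → Bool} {I : Finset (Fin n)}
    (h : ∀ v, ∀ j ∈ I, s v j = t v j)
    (hU : ∃! v, InFace base I v ∧ IsSinkIn s I v) :
    ∃! v, InFace base I v ∧ IsSinkIn t I v := by
  obtain ⟨w, ⟨hwf, hws⟩, hwu⟩ := hU
  refine ⟨w, ⟨hwf, fun j hj => (h w j hj) ▸ hws j hj⟩, ?_⟩
  intro v ⟨hvf, hvs⟩
  exact hwu v ⟨hvf, fun j hj => (h v j hj).trans (hvs j hj)⟩

/-- Reversing all edges of one dimension preserves the unique-sink property. -/
lemma uso_rev {n : ℕ} (s : (Fin n → Bool) → (Fin n → Bool)) (i : Fin n)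
    (hU : ∀ base I, ∃! v, InFace base I v ∧ IsSinkIn s I v) :
    ∀ base I, ∃! v, InFace base I v ∧ IsSinkIn (revSet {i} s) I v := by
  intro base I
  by_cases hi : i ∈ I
  case neg =>
    refine usink_congr (fun v j hj => ?_) (hU base I)
    have : j ≠ i := fun h => hi (h ▸ hj)
    simp [revSet, this]
  case pos =>
    set I' := I.erase i with hI'
    have hiI' : i ∉ I' := Finset.notMem_erase i I
    set b0 : Fin n → Bool := Function.update base i false with hb0
    set b1 : Fin n → Bool := Function.update base i true with hb1
    obtain ⟨w0, ⟨hw0f, hw0s⟩, hw0u⟩ := hU b0 I'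
    obtain ⟨w1, ⟨hw1f, hw1s⟩, hw1u⟩ := hU b1 I'
    have hw0i : w0 i = false := by
      have := hw0f i hiI'; simpa [hb0] using this
    have hw1i : w1 i = true := by
      have := hw1f i hiI'; simpa [hb1] using this
    have hne : w0 ≠ w1 := fun h => by simp [h, hw1i] at hw0i
    -- characterization of sinks of (base, I) with respect to s
    have char : ∀ v, (InFace base I v ∧ IsSinkIn s I v) ↔
        ((v = w0 ∧ s w0 i = false) ∨ (v = w1 ∧ s w1 i = false)) := by
      intro v
      constructor
      · rintro ⟨hvf, hvs⟩
        have hvs' : IsSinkIn s I' v := fun j hj => hvs j (Finset.mem_of_mem_erase hj)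
        cases hvi : v i
        · have hvf0 : InFace b0 I' v := by
            intro j hj
            by_cases hji : j = i
            · subst hji; simp [hb0, hvi]
            · have hjI : j ∉ I := fun h => hj (Finset.mem_erase.2 ⟨hji, h⟩)
              simp [hb0, hji, hvf j hjI]
          have hv0 : v = w0 := hw0u v ⟨hvf0, hvs'⟩
          exact Or.inl ⟨hv0, hv0 ▸ hvs i hi⟩
        · have hvf1 : InFace b1 I' v := by
            intro j hj
            by_cases hji : j = i
            · subst hji; simp [hb1, hvi]
            · have hjI : j ∉ I := fun h => hj (Finset.mem_erase.2 ⟨hji, h⟩)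
              simp [hb1, hji, hvf j hjI]
          have hv1 : v = w1 := hw1u v ⟨hvf1, hvs'⟩
          exact Or.inr ⟨hv1, hv1 ▸ hvs i hi⟩
      · rintro (⟨rfl, hsi⟩ | ⟨rfl, hsi⟩)
        · refine ⟨fun j hj => ?_, fun j hj => ?_⟩
          · have hji : j ≠ i := fun h => hj (h ▸ hi)
            have : j ∉ I' := fun h => hj (Finset.mem_of_mem_erase h)
            have := hw0f j this
            simpa [hb0, hji] using this
          · by_cases hji : j = i
            · subst hji; exact hsi
            · exact hw0s j (Finset.mem_erase.2 ⟨hji, hj⟩)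
        · refine ⟨fun j hj => ?_, fun j hj => ?_⟩
          · have hji : j ≠ i := fun h => hj (h ▸ hi)
            have : j ∉ I' := fun h => hj (Finset.mem_of_mem_erase h)
            have := hw1f j this
            simpa [hb1, hji] using this
          · by_cases hji : j = i
            · subst hji; exact hsi
            · exact hw1s j (Finset.mem_erase.2 ⟨hji, hj⟩)
    -- same characterization for revSet {i} s, with reversed i-edge condition
    have char' : ∀ v, (InFace base I v ∧ IsSinkIn (revSet {i} s) I v) ↔
        ((v = w0 ∧ s w0 i = true) ∨ (v = w1 ∧ s w1 i = true)) := by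
      intro v
      constructor
      · rintro ⟨hvf, hvs⟩
        have hvs' : IsSinkIn s I' v := by
          intro j hj
          have hji : j ≠ i := fun h => hiI' (h ▸ hj)
          have := hvs j (Finset.mem_of_mem_erase hj)
          simpa [revSet, hji] using this
        cases hvi : v i
        · have hvf0 : InFace b0 I' v := by
            intro j hj
            by_cases hji : j = i
            · subst hji; simp [hb0, hvi]
            · have hjI : j ∉ I := fun h => hj (Finset.mem_erase.2 ⟨hji, h⟩)
              simp [hb0, hji, hvf j hjI]
          have hv0 : v = w0 := hw0u v ⟨hvf0, hvs'⟩
          have := hvs i hi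
          rw [hv0] at this
          simp only [revSet, if_pos (Finset.mem_singleton_self i)] at this
          exact Or.inl ⟨hv0, by simpa using this⟩
        · have hvf1 : InFace b1 I' v := by
            intro j hj
            by_cases hji : j = i
            · subst hji; simp [hb1, hvi]
            · have hjI : j ∉ I := fun h => hj (Finset.mem_erase.2 ⟨hji, h⟩)
              simp [hb1, hji, hvf j hjI]
          have hv1 : v = w1 := hw1u v ⟨hvf1, hvs'⟩
          have := hvs i hi
          rw [hv1] at this
          simp only [revSet, if_pos (Finset.mem_singleton_self i)] at this
          exact Or.inr ⟨hv1, by simpa using this⟩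
      · rintro (⟨rfl, hsi⟩ | ⟨rfl, hsi⟩)
        · refine ⟨fun j hj => ?_, fun j hj => ?_⟩
          · have hji : j ≠ i := fun h => hj (h ▸ hi)
            have : j ∉ I' := fun h => hj (Finset.mem_of_mem_erase h)
            have := hw0f j this
            simpa [hb0, hji] using this
          · by_cases hji : j = i
            · subst hji; simp [revSet, hsi]
            · have := hw0s j (Finset.mem_erase.2 ⟨hji, hj⟩)
              simpa [revSet, hji] using this
        · refine ⟨fun j hj => ?_, fun j hj => ?_⟩
          · have hji : j ≠ i := fun h => hj (h ▸ hi)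
            have : j ∉ I' := fun h => hj (Finset.mem_of_mem_erase h)
            have := hw1f j this
            simpa [hb1, hji] using this
          · by_cases hji : j = i
            · subst hji; simp [revSet, hsi]
            · have := hw1s j (Finset.mem_erase.2 ⟨hji, hj⟩)
              simpa [revSet, hji] using this
    -- from the unique sink of (base, I) under s: exactly one of w0, w1 has s · i = false
    obtain ⟨w, hw, hwu⟩ := hU base I
    rcases (char w).1 hw with ⟨hww, h0⟩ | ⟨hww, h1⟩
    · -- w0 is the sink under s, so s w1 i = true and w1 is the sink under revSet
      have h1t : s w1 i = true := by
        by_contra h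
        have h1f : s w1 i = false := Bool.eq_false_iff.2 h
        have : w1 = w := hwu w1 ((char w1).2 (Or.inr ⟨rfl, h1f⟩))
        exact hne (this.trans hww).symm
      refine ⟨w1, (char' w1).2 (Or.inr ⟨rfl, h1t⟩), ?_⟩
      intro v hv
      rcases (char' v).1 hv with ⟨rfl, h⟩ | ⟨rfl, _⟩
      · rw [h0] at h; exact absurd h Bool.false_ne_true
      · rfl
    · -- w1 is the sink under s, so s w0 i = true and w0 is the sink under revSet
      have h0t : s w0 i = true := by
        by_contra h
        have h0f : s w0 i = false := Bool.eq_false_iff.2 h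
        have : w0 = w := hwu w0 ((char w0).2 (Or.inl ⟨rfl, h0f⟩))
        exact hne (this.trans hww)
      refine ⟨w0, (char' w0).2 (Or.inl ⟨rfl, h0t⟩), ?_⟩
      intro v hv
      rcases (char' v).1 hv with ⟨rfl, _⟩ | ⟨rfl, h⟩
      · rfl
      · rw [h1] at h; exact absurd h Bool.false_ne_true

/-- Reversing all edges in any set of dimensions preserves the unique-sink property. -/
lemma uso_revSet {n : ℕ} (s : (Fin n → Bool) → (Fin n → Bool)) (J : Finset (Fin n))
    (hU : ∀ base I, ∃! v, InFace base I v ∧ IsSinkIn s I v) :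
    ∀ base I, ∃! v, InFace base I v ∧ IsSinkIn (revSet J s) I v := by
  induction J using Finset.induction_on generalizing s with
  | empty =>
    intro base I
    refine usink_congr (fun v j hj => ?_) (hU base I)
    simp [revSet]
  | @insert i J hiJ ih =>
    have key : revSet (insert i J) s = revSet {i} (revSet J s) := by
      funext v j
      by_cases hji : j = i
      · subst hji
        simp [revSet, hiJ]
      · by_cases hjJ : j ∈ J <;> simp [revSet, hji, hjJ]
    rw [key]
    exact uso_rev (revSet J s) i (ih s hU)

theorem stmt0 (n : ℕ) (s : (Fin n → Bool) → (Fin n → Bool)) :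
    ((∀ (u : Fin n → Bool) (i : Fin n), s u i ≠ s (flipV u i) i) ∧
      ∀ (base : Fin n → Bool) (I : Finset (Fin n)),
        ∃! v, InFace base I v ∧ IsSinkIn s I v) ↔
    (∀ u v : Fin n → Bool, u ≠ v → ∃ i, u i ≠ v i ∧ s u i ≠ s v i) := by
  constructor
  · rintro ⟨_, hU⟩ u v huv
    by_contra hcon
    push_neg at hcon
    classical
    set D : Finset (Fin n) := Finset.univ.filter (fun i => u i ≠ v i) with hD
    set J : Finset (Fin n) := D.filter (fun i => s u i = true) with hJ
    have hagree : ∀ i ∈ D, s u i = s v i := by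
      intro i hi
      have hiD : u i ≠ v i := (Finset.mem_filter.1 hi).2
      exact hcon i hiD
    have hUs := uso_revSet s J hU u D
    obtain ⟨w, _, hwu⟩ := hUs
    have husink : InFace u D u ∧ IsSinkIn (revSet J s) D u := by
      refine ⟨fun j _ => rfl, fun j hj => ?_⟩
      by_cases hjJ : j ∈ J
      · have : s u j = true := (Finset.mem_filter.1 hjJ).2
        simp [revSet, hjJ, this]
      · have : s u j ≠ true := fun h => hjJ (Finset.mem_filter.2 ⟨hj, h⟩)
        have h' : s u j = false := Bool.eq_false_iff.2 this
        simp [revSet, hjJ, h']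
    have hvsink : InFace u D v ∧ IsSinkIn (revSet J s) D v := by
      constructor
      · intro j hj
        by_contra h
        have : u j ≠ v j := fun h' => h h'.symm
        exact hj (Finset.mem_filter.2 ⟨Finset.mem_univ j, this⟩)
      · intro j hj
        have hsv : s v j = s u j := (hagree j hj).symm
        by_cases hjJ : j ∈ J
        · have : s u j = true := (Finset.mem_filter.1 hjJ).2
          simp [revSet, hjJ, hsv, this]
        · have : s u j ≠ true := fun h => hjJ (Finset.mem_filter.2 ⟨hj, h⟩)
          have h' : s u j = false := Bool.eq_false_iff.2 this
          simp [revSet, hjJ, hsv, h']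
    exact huv ((hwu u husink).trans (hwu v hvsink).symm)
  · intro h
    constructor
    · intro u i
      have hne : u ≠ flipV u i := by
        intro heq
        have := congrFun heq i
        simp [flipV] at this
      obtain ⟨j, hj1, hj2⟩ := h u (flipV u i) hne
      have hji : j = i := by
        by_contra hji
        exact hj1 (by simp [flipV, hji])
      exact hji ▸ hj2
    · intro base I
      classical
      -- existence via injectivity/surjectivity on the face
      set ext : ({ i // i ∈ I } → Bool) → (Fin n → Bool) :=
        fun x j => if h : j ∈ I then x ⟨j, h⟩ else base j with hext
      set Φ : ({ i // i ∈ I } → Bool) → ({ i // i ∈ I } → Bool) :=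
        fun x i => s (ext x) i.val with hΦ
      have hinj : Function.Injective Φ := by
        intro x y hxy
        by_contra hne
        have hexne : ext x ≠ ext y := by
          intro heq
          apply hne
          funext i
          have := congrFun heq i.val
          simpa [hext, i.prop] using this
        obtain ⟨j, hj1, hj2⟩ := h (ext x) (ext y) hexne
        have hjI : j ∈ I := by
          by_contra hjI
          exact hj1 (by simp [hext, hjI])
        exact hj2 (congrFun hxy ⟨j, hjI⟩)
      have hsurj : Function.Surjective Φ := Finite.surjective_of_injective hinj
      obtain ⟨x, hx⟩ := hsurj (fun _ => false)
      refine ⟨ext x, ⟨fun j hj => by simp [hext, hj], fun j hj => ?_⟩, ?_⟩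
      · exact congrFun hx ⟨j, hj⟩
      · -- uniqueness
        intro v ⟨hvf, hvs⟩
        by_contra hne
        obtain ⟨j, hj1, hj2⟩ := h v (ext x) hne
        have hjI : j ∈ I := by
          by_contra hjI
          have h1 : v j = base j := hvf j hjI
          have h2 : ext x j = base j := by simp [hext, hjI]
          exact hj1 (h1.trans h2.symm)
        have h1 : s v j = false := hvs j hjI
        have h2 : s (ext x) j = false := congrFun hx ⟨j, hjI⟩
        exact hj2 (h1.trans h2.symm)
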